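/- Let π : E → B be a principal G-bundle with E, B, F locally compact Hausdorff and B second countable. Given a σ-finite Baire measure μ_B on B and a G-invariant finite Baire measure ν on the fiber F, there is at most one Baire measure μ_E on E such that for every local trivialization ψ over an open set U ⊂ B, the pushforward ψ_*(μ_E restricted to π^{-1}(U)) equals the product measure ν × μ_B|_U. -/
import Mathlib


open MeasureTheory

/-- Uniqueness of the product measure on the total space of a principal bundle.
Let `π : E → B` be a principal `G`-bundle (encoded by a family of local trivializations
`ψ b : π⁻¹(U b) ≃ₜ U b × F` over an open cover `U`), with `E`, `B`, `F` locally compact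
Hausdorff and `B` second countable. Given a σ-finite Borel (= Baire) measure `μB` on `B`
and a `G`-invariant finite measure `ν` on the fiber `F`, there is at most one measure on
`E` whose image under every local trivialization is the product measure `μB × ν`. -/
theorem stmt4 {E B F : Type*} [TopologicalSpace E] [TopologicalSpace B] [TopologicalSpace F]
    [LocallyCompactSpace E] [T2Space E]
    [LocallyCompactSpace B] [T2Space B] [SecondCountableTopology B]
    [LocallyCompactSpace F] [T2Space F]
    [MeasurableSpace E] [BorelSpace E] [MeasurableSpace B] [BorelSpace B]
    [MeasurableSpace F] [BorelSpace F]
    (G : Type*) [Group G] [MulAction G F]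
    (π : E → B) (hπ : Continuous π)
    (μB : Measure B) [SigmaFinite μB]
    (ν : Measure F) [IsFiniteMeasure ν]
    (hinv : ∀ (g : G) (s : Set F), MeasurableSet s → ν ((g • ·) ⁻¹' s) = ν s)
    (U : B → Set B) (hUopen : ∀ b, IsOpen (U b)) (hUmem : ∀ b, b ∈ U b)
    (ψ : ∀ b : B, ↥(π ⁻¹' (U b)) ≃ₜ (↥(U b) × F))
    (hψ : ∀ (b : B) (x : ↥(π ⁻¹' (U b))), ((ψ b x).1 : B) = π (x : E))
    (μ μ' : Measure E)
    (hμ : ∀ b : B, Measure.map (ψ b) (Measure.comap Subtype.val μ) =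
      (Measure.comap Subtype.val μB).prod ν)
    (hμ' : ∀ b : B, Measure.map (ψ b) (Measure.comap Subtype.val μ') =
      (Measure.comap Subtype.val μB).prod ν) :
    μ = μ' := by
  -- countable subcover of `B` by the `U b`
  obtain ⟨T, hTc, hTcov⟩ := TopologicalSpace.countable_cover_nhds
    (f := U) (fun b => (hUopen b).mem_nhds (hUmem b))
  have hcov : ⋃ b ∈ T, π ⁻¹' (U b) = Set.univ := by
    rw [← Set.preimage_iUnion₂, hTcov, Set.preimage_univ]
  refine Measure.ext_of_biUnion_eq_univ hTc hcov (fun b _ => ?_)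
  -- on each chart, the two measures coincide
  have hmeas : MeasurableSet (π ⁻¹' (U b)) := ((hUopen b).preimage hπ).measurableSet
  have hcomap : Measure.comap Subtype.val μ =
      (Measure.comap Subtype.val μ' : Measure ↥(π ⁻¹' (U b))) := by
    have key : Measure.map (ψ b) (Measure.comap Subtype.val μ) =
        Measure.map (ψ b) (Measure.comap Subtype.val μ') := (hμ b).trans (hμ' b).symm
    calc Measure.comap Subtype.val μ
        = Measure.map (ψ b).toMeasurableEquiv.symm (Measure.map (ψ b).toMeasurableEquiv (Measure.comap Subtype.val μ)) := by
          rw [Measure.map_map (ψ b).toMeasurableEquiv.symm.measurable (ψ b).toMeasurableEquiv.measurable]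
          simp
      _ = Measure.map (ψ b).toMeasurableEquiv.symm (Measure.map (ψ b).toMeasurableEquiv (Measure.comap Subtype.val μ')) := by
          have : Measure.map (ψ b).toMeasurableEquiv (Measure.comap Subtype.val μ) =
              Measure.map (ψ b).toMeasurableEquiv (Measure.comap Subtype.val μ') := by
            simpa [Homeomorph.toMeasurableEquiv_coe] using key
          rw [this]
      _ = Measure.comap Subtype.val μ' := by
          rw [Measure.map_map (ψ b).toMeasurableEquiv.symm.measurable (ψ b).toMeasurableEquiv.measurable]
          simp
  calc μ.restrict (π ⁻¹' (U b))
      = Measure.map Subtype.val (Measure.comap Subtype.val μ) :=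
        (map_comap_subtype_coe hmeas μ).symm
    _ = Measure.map Subtype.val (Measure.comap Subtype.val μ') := by rw [hcomap]
    _ = μ'.restrict (π ⁻¹' (U b)) := map_comap_subtype_coe hmeas μ'
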